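/- Let p₃ > 0, p₄ ≠ 0, ρ > 0, and let D, R, I : ℝ → ℝ be differentiable functions satisfying D' = 0, R' = -4p₃·D·I - 2p₄ρ·I, I' = 4p₃·D·R + 2p₄ρ·R on ℝ, with D(0)² + R(0)² + I(0)² = ρ². Then for all τ ∈ ℝ: D(τ) = D(0), R(τ) = R(0)·cos(2(2p₃·D(0) + p₄ρ)·τ) - I(0)·sin(2(2p₃·D(0) + p₄ρ)·τ), and I(τ) = R(0)·sin(2(2p₃·D(0) + p₄ρ)·τ) + I(0)·cos(2(2p₃·D(0) + p₄ρ)·τ). -/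

import Mathlib

/-- Case 12 (p₂ = p₃ > 0, p₄ ≠ 0, p₁ = p₅ = 0) of the quadratic system: explicit solution. -/
theorem stmt_7 (p₃ p₄ ρ : ℝ) (hp₃ : 0 < p₃) (hp₄ : p₄ ≠ 0) (hρ : 0 < ρ)
    (D R I : ℝ → ℝ)
    (hD : ∀ τ, HasDerivAt D 0 τ)
    (hR : ∀ τ, HasDerivAt R (-(4 * p₃ * D τ * I τ) - 2 * p₄ * ρ * I τ) τ)
    (hI : ∀ τ, HasDerivAt I (4 * p₃ * D τ * R τ + 2 * p₄ * ρ * R τ) τ)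
    (hsphere : D 0 ^ 2 + R 0 ^ 2 + I 0 ^ 2 = ρ ^ 2) :
    ∀ τ : ℝ,
      D τ = D 0 ∧
      R τ = R 0 * Real.cos (2 * (2 * p₃ * D 0 + p₄ * ρ) * τ)
              - I 0 * Real.sin (2 * (2 * p₃ * D 0 + p₄ * ρ) * τ) ∧
      I τ = R 0 * Real.sin (2 * (2 * p₃ * D 0 + p₄ * ρ) * τ)
              + I 0 * Real.cos (2 * (2 * p₃ * D 0 + p₄ * ρ) * τ) := by
  have hDc : ∀ τ, D τ = D 0 := by
    intro τ
    exact is_const_of_deriv_eq_zero (fun x => (hD x).differentiableAt)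
      (fun x => (hD x).deriv) τ 0
  set ω := 2 * (2 * p₃ * D 0 + p₄ * ρ) with hωdef
  have hR' : ∀ τ, HasDerivAt R (-ω * I τ) τ := by
    intro τ
    have := hR τ
    rw [hDc τ] at this
    convert this using 1
    rw [hωdef]; ring
  have hI' : ∀ τ, HasDerivAt I (ω * R τ) τ := by
    intro τ
    have := hI τ
    rw [hDc τ] at this
    convert this using 1
    rw [hωdef]; ring
  set A : ℝ → ℝ := fun τ => R 0 * Real.cos (ω * τ) - I 0 * Real.sin (ω * τ) with hAdef
  set B : ℝ → ℝ := fun τ => R 0 * Real.sin (ω * τ) + I 0 * Real.cos (ω * τ) with hBdef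
  have hlin : ∀ τ : ℝ, HasDerivAt (fun t : ℝ => ω * t) ω τ := by
    intro τ
    simpa using (hasDerivAt_id τ).const_mul ω
  have hA : ∀ τ, HasDerivAt A (-ω * B τ) τ := by
    intro τ
    have hc := (hlin τ).cos
    have hs := (hlin τ).sin
    have := (hc.const_mul (R 0)).sub (hs.const_mul (I 0))
    refine this.congr_deriv ?_
    simp only [hBdef]; ring
  have hB : ∀ τ, HasDerivAt B (ω * A τ) τ := by
    intro τ
    have hc := (hlin τ).cos
    have hs := (hlin τ).sin
    have := (hs.const_mul (R 0)).add (hc.const_mul (I 0))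
    refine this.congr_deriv ?_
    simp only [hAdef]; ring
  set E : ℝ → ℝ := fun τ => (R τ - A τ) ^ 2 + (I τ - B τ) ^ 2 with hEdef
  have hE : ∀ τ, HasDerivAt E 0 τ := by
    intro τ
    have h1 := (((hR' τ).sub (hA τ)).pow 2).add (((hI' τ).sub (hB τ)).pow 2)
    refine h1.congr_deriv ?_
    simp only [Pi.sub_apply]; ring
  have hEc : ∀ τ, E τ = E 0 := by
    intro τ
    exact is_const_of_deriv_eq_zero (fun x => (hE x).differentiableAt)
      (fun x => (hE x).deriv) τ 0
  have hE0 : E 0 = 0 := by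
    simp [hEdef, hAdef, hBdef]
  intro τ
  have hEτ : E τ = 0 := (hEc τ).trans hE0
  have hsq : (R τ - A τ) ^ 2 + (I τ - B τ) ^ 2 = 0 := hEτ
  have h1 : R τ - A τ = 0 := by nlinarith [sq_nonneg (R τ - A τ), sq_nonneg (I τ - B τ)]
  have h2 : I τ - B τ = 0 := by nlinarith [sq_nonneg (R τ - A τ), sq_nonneg (I τ - B τ)]
  refine ⟨hDc τ, ?_, ?_⟩
  · have : A τ = R 0 * Real.cos (ω * τ) - I 0 * Real.sin (ω * τ) := rfl
    linarith [this ▸ h1]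
  · have : B τ = R 0 * Real.sin (ω * τ) + I 0 * Real.cos (ω * τ) := rfl
    linarith [this ▸ h2]
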